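/- Let C_cap = {x ∈ ℝ³ : ‖x‖₂ = 1, x₃ ≥ c} with c ∈ [0,1), and let ĝ be a unit vector. If ĝ₃ ≥ c, then ĝ maximizes ⟨ĝ, x⟩ over x ∈ C_cap. If ĝ₃ < c and the x-y projection ĝ_{xy} = (ĝ₁, ĝ₂) is nonzero, then the maximizer is s* = (√(1−c²)·ĝ_{xy}/‖ĝ_{xy}‖₂, c), i.e., ⟨ĝ, s*⟩ ≥ ⟨ĝ, x⟩ for all x ∈ C_cap. -/

import Mathlib

open RealInnerProductSpace

lemma sq_le_imp_le (a b : ℝ) (_ha : 0 ≤ a) (hb : 0 ≤ b) (h : a^2 ≤ b^2) : a ≤ b := by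
  nlinarith

lemma key_ineq (r g2 c t u v : ℝ) (hr : 0 < r) (hrg : r^2 + g2^2 = 1)
    (hc0 : 0 ≤ c) (hgc : g2 < c) (hct : c ≤ t) (ht1 : t ≤ 1)
    (hu : u^2 = 1 - t^2) (hu0 : 0 ≤ u) (hv : v^2 = 1 - c^2) (hv0 : 0 ≤ v)
    (hc1 : c < 1) :
    r*u + g2*t ≤ r*v + g2*c := by
  have hvpos : 0 < v := by nlinarith
  rcases le_or_gt g2 0 with h | h
  · have huv : u ≤ v := by nlinarith
    nlinarith
  · have h1 : g2*v ≤ r*c := by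
      refine sq_le_imp_le _ _ (mul_nonneg h.le hv0) (mul_nonneg hr.le hc0) ?_
      nlinarith
    have h2 : g2*u ≤ r*t := by
      refine sq_le_imp_le _ _ (mul_nonneg h.le hu0) (mul_nonneg hr.le (by linarith)) ?_
      nlinarith
    have hprod : 0 ≤ (t - c) * ((r*c - g2*v) + (r*t - g2*u)) :=
      mul_nonneg (by linarith) (by linarith)
    nlinarith [mul_pos hr hvpos, sq_nonneg (u - v), sq_nonneg (u + v)]

lemma norm_one_sum_sq (x : EuclideanSpace ℝ (Fin 3)) (hx : ‖x‖ = 1) :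
    x 0 ^ 2 + x 1 ^ 2 + x 2 ^ 2 = 1 := by
  have h := hx
  rw [EuclideanSpace.norm_eq] at h
  have h2 := congrArg (·^2) h
  simp only [Real.norm_eq_abs, sq_abs, Fin.sum_univ_three, one_pow] at h2
  rwa [Real.sq_sqrt (by positivity)] at h2

lemma inner_three (g x : EuclideanSpace ℝ (Fin 3)) :
    ⟪g, x⟫ = g 0 * x 0 + g 1 * x 1 + g 2 * x 2 := by
  simp [PiLp.inner_apply, RCLike.inner_apply, Fin.sum_univ_three]
  ring

lemma cs2 (a b p q : ℝ) : a*p + b*q ≤ Real.sqrt (a^2+b^2) * Real.sqrt (p^2+q^2) := by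
  have h1 : a*p + b*q ≤ Real.sqrt ((a*p+b*q)^2) := by
    rw [Real.sqrt_sq_eq_abs]; exact le_abs_self _
  have h2 : (a*p+b*q)^2 ≤ (a^2+b^2)*(p^2+q^2) := by nlinarith [sq_nonneg (a*q - b*p)]
  calc a*p + b*q ≤ Real.sqrt ((a*p+b*q)^2) := h1
    _ ≤ Real.sqrt ((a^2+b^2)*(p^2+q^2)) := Real.sqrt_le_sqrt h2
    _ = _ := Real.sqrt_mul (by positivity) _

set_option maxHeartbeats 1000000 in
theorem stmt6 (c : ℝ) (hc : c ∈ Set.Ico (0:ℝ) 1)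
    (g : EuclideanSpace ℝ (Fin 3)) (hg : ‖g‖ = 1) :
    let sstar : EuclideanSpace ℝ (Fin 3) :=
      (EuclideanSpace.equiv (Fin 3) ℝ).symm
        ![Real.sqrt (1 - c ^ 2) * g 0 / Real.sqrt (g 0 ^ 2 + g 1 ^ 2),
          Real.sqrt (1 - c ^ 2) * g 1 / Real.sqrt (g 0 ^ 2 + g 1 ^ 2), c]
    (c ≤ g 2 →
      ∀ x : EuclideanSpace ℝ (Fin 3), ‖x‖ = 1 → c ≤ x 2 → ⟪g, x⟫ ≤ ⟪g, g⟫) ∧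
    (g 2 < c → ¬(g 0 = 0 ∧ g 1 = 0) →
      ‖sstar‖ = 1 ∧ c ≤ sstar 2 ∧
        ∀ x : EuclideanSpace ℝ (Fin 3), ‖x‖ = 1 → c ≤ x 2 →
          ⟪g, x⟫ ≤ ⟪g, sstar⟫) := by
  obtain ⟨hc0, hc1⟩ := hc
  intro sstar
  have hgsum := norm_one_sum_sq g hg
  constructor
  · intro _ x hx _
    have h1 : ⟪g, x⟫ ≤ ‖g‖ * ‖x‖ := real_inner_le_norm g x
    have h2 : ⟪g, g⟫ = 1 := by
      rw [real_inner_self_eq_norm_sq, hg]; norm_num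
    rw [h2, hg, hx] at *
    linarith
  · intro hg2 hxy
    have hsq : 0 < g 0 ^ 2 + g 1 ^ 2 := by
      rcases not_and_or.mp hxy with h | h
      · have : g 0 ^ 2 > 0 := by positivity
        nlinarith [sq_nonneg (g 1)]
      · have : g 1 ^ 2 > 0 := by positivity
        nlinarith [sq_nonneg (g 0)]
    set r := Real.sqrt (g 0 ^ 2 + g 1 ^ 2) with hrdef
    have hr : 0 < r := Real.sqrt_pos.mpr hsq
    have hr2 : r ^ 2 = g 0 ^ 2 + g 1 ^ 2 := Real.sq_sqrt hsq.le
    set v := Real.sqrt (1 - c ^ 2) with hvdef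
    have hv0 : 0 ≤ v := Real.sqrt_nonneg _
    have hv2 : v ^ 2 = 1 - c ^ 2 := Real.sq_sqrt (by nlinarith)
    have hs0 : sstar 0 = v * g 0 / r := rfl
    have hs1 : sstar 1 = v * g 1 / r := rfl
    have hs2 : sstar 2 = c := rfl
    have hinner_s : ⟪g, sstar⟫ = r * v + g 2 * c := by
      rw [inner_three, hs0, hs1, hs2]
      field_simp
      nlinarith [hr2]
    refine ⟨?_, ?_, ?_⟩
    · rw [EuclideanSpace.norm_eq]
      have e : (v * g 0 / r)^2 + (v * g 1 / r)^2 + c^2 = 1 := by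
        have e1 : (v * g 0 / r)^2 + (v * g 1 / r)^2 = v^2 * (g 0^2 + g 1^2) / r^2 := by
          ring
        rw [e1, ← hr2, mul_div_assoc, div_self (by positivity), mul_one, hv2]
        ring
      have : ∑ i : Fin 3, ‖sstar i‖ ^ 2 = 1 := by
        rw [Fin.sum_univ_three, hs0, hs1, hs2]
        simp only [Real.norm_eq_abs, sq_abs]
        exact e
      rw [this, Real.sqrt_one]
    · rw [hs2]
    · intro x hx hx2
      have hxsum := norm_one_sum_sq x hx
      have hx2le : x 2 ≤ 1 := by nlinarith [sq_nonneg (x 0), sq_nonneg (x 1), sq_nonneg (x 2 - 1), sq_nonneg (x 2 + 1)]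
      rw [inner_three, hinner_s]
      set u := Real.sqrt (1 - x 2 ^ 2) with hudef
      have hu0 : 0 ≤ u := Real.sqrt_nonneg _
      have hu2 : u ^ 2 = 1 - x 2 ^ 2 := Real.sq_sqrt (by nlinarith)
      have hcs : g 0 * x 0 + g 1 * x 1 ≤ r * u := by
        have := cs2 (g 0) (g 1) (x 0) (x 1)
        have heq : Real.sqrt (x 0 ^ 2 + x 1 ^ 2) = u := by
          rw [hudef]; congr 1; nlinarith
        rw [heq] at this
        exact this
      have hkey := key_ineq r (g 2) c (x 2) u v hr (by nlinarith) hc0 hg2 hx2 hx2le hu2 hu0 hv2 hv0 hc1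
      linarith
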